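/- As δ → 0, the functional q ↦ ∫_Ω 𝓖*_{ε,δ}(x, q(x)) dx converges locally uniformly on bounded subsets of L^α(Ω;ℝ^d) to the functional q ↦ ∫_Ω (w(x)|q(x)| + (ε/α)|q(x)|^α) dx. -/

import Mathlib

open MeasureTheory Filter
open scoped ENNReal

/-- The Fenchel conjugate `𝓖*_{ε,δ}` of the doubly regularized integrand. -/
noncomputable def calGstar {F : Type*} [NormedAddCommGroup F] (ε α δ w : ℝ) (q : F) : ℝ :=
  if ‖q‖ ≤ δ then ‖q‖ ^ 2 * w / (2 * δ) - δ * w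
  else (ε / α) * (‖q‖ - δ) ^ α - (3 / 2) * (δ * w) + ‖q‖ * w

lemma calGstar_norm_eq {F : Type*} [NormedAddCommGroup F] (ε α δ c : ℝ) (v : F) :
    calGstar ε α δ c v = calGstar ε α δ c (‖v‖ : ℝ) := by
  simp [calGstar, norm_norm]

lemma rpow_mvt {a b p : ℝ} (ha : 0 ≤ a) (hab : a ≤ b) (hp : 1 ≤ p) :
    b ^ p - a ^ p ≤ p * b ^ (p - 1) * (b - a) := by
  rcases eq_or_lt_of_le hab with rfl | h
  · simp
  obtain ⟨c, hc, hc'⟩ := exists_hasDerivAt_eq_slope (fun x => x ^ p)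
      (fun x => p * x ^ (p - 1)) h
      (fun x _ => (Real.continuousAt_rpow_const x p (Or.inr (by linarith))).continuousWithinAt)
      (fun x _ => Real.hasDerivAt_rpow_const (Or.inr hp))
  have hc0 : 0 ≤ c := le_trans ha hc.1.le
  have hcb : c ≤ b := hc.2.le
  rw [eq_div_iff (sub_ne_zero.mpr h.ne')] at hc'
  rw [← hc']
  have hcc : c ^ (p - 1) ≤ b ^ (p - 1) := Real.rpow_le_rpow hc0 hcb (by linarith)
  have hp0 : (0:ℝ) ≤ p := by linarith
  exact mul_le_mul_of_nonneg_right (mul_le_mul_of_nonneg_left hcc hp0) (sub_nonneg.mpr hab)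

lemma calGstar_pt_bound {ε α δ c M r : ℝ} (hε : 0 < ε) (hα : 1 < α) (hδ : 0 < δ)
    (hc0 : 0 ≤ c) (hcM : c ≤ M) (hr : 0 ≤ r) :
    |calGstar ε α δ c r - (c * r + ε / α * r ^ α)| ≤
      (δ * (5 / 2 * M + ε) + ε / α * δ ^ α) * (1 + r ^ α) := by
  have hM0 : 0 ≤ M := le_trans hc0 hcM
  have hεα : 0 < ε / α := by positivity
  have hrα : 0 ≤ r ^ α := Real.rpow_nonneg hr α
  have hδα : 0 ≤ δ ^ α := Real.rpow_nonneg hδ.le α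
  rw [calGstar, Real.norm_of_nonneg hr]
  split_ifs with h
  · have h2 : r ^ α ≤ δ ^ α := Real.rpow_le_rpow hr h (by linarith)
    have hq0 : 0 ≤ r ^ 2 * c / (2 * δ) := by positivity
    have hq : r ^ 2 * c / (2 * δ) ≤ δ * c / 2 := by
      rw [div_le_div_iff₀ (by positivity) (by norm_num)]
      nlinarith [mul_nonneg (mul_nonneg (sub_nonneg.mpr h) (by linarith : (0:ℝ) ≤ δ + r)) hc0]
    have hcr : c * r ≤ M * δ := mul_le_mul hcM h hr hM0
    have h2' : ε / α * r ^ α ≤ ε / α * δ ^ α := mul_le_mul_of_nonneg_left h2 hεα.le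
    rw [abs_le]
    constructor <;>
      nlinarith [mul_nonneg (mul_nonneg hδ.le hM0) hrα, mul_nonneg (mul_nonneg hδ.le hε.le) hrα,
        mul_nonneg hεα.le (mul_nonneg hδα hrα), mul_nonneg hδ.le hM0, mul_nonneg hεα.le hδα]
  · push_neg at h
    have h1 : r ^ α - (r - δ) ^ α ≤ α * r ^ (α - 1) * δ := by
      have h' := rpow_mvt (a := r - δ) (b := r) (by linarith) (by linarith) hα.le
      rw [show r - (r - δ) = δ by ring] at h'
      exact h'
    have h2 : (r - δ) ^ α ≤ r ^ α := Real.rpow_le_rpow (by linarith) (by linarith) (by linarith)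
    have h2nn : 0 ≤ (r - δ) ^ α := Real.rpow_nonneg (by linarith) _
    have h3 : r ^ (α - 1) ≤ 1 + r ^ α := by
      rcases le_total r 1 with hr1 | hr1
      · have := Real.rpow_le_one (z := α - 1) hr hr1 (by linarith)
        linarith
      · have := Real.rpow_le_rpow_of_exponent_le hr1 (by linarith : α - 1 ≤ α)
        linarith
    have hrα1 : 0 ≤ r ^ (α - 1) := Real.rpow_nonneg hr _
    have hεαα : ε / α * α = ε := div_mul_cancel₀ ε (by positivity)
    have h1' : ε / α * (r ^ α - (r - δ) ^ α) ≤ ε / α * (α * r ^ (α - 1) * δ) :=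
      mul_le_mul_of_nonneg_left h1 hεα.le
    have h1'' : ε / α * (α * r ^ (α - 1) * δ) = ε * δ * r ^ (α - 1) := by
      field_simp
    have h3' : ε * δ * r ^ (α - 1) ≤ ε * δ * (1 + r ^ α) :=
      mul_le_mul_of_nonneg_left h3 (by positivity)
    have h2' : ε / α * (r - δ) ^ α ≤ ε / α * r ^ α := mul_le_mul_of_nonneg_left h2 hεα.le
    have hcδ : δ * c ≤ δ * M := mul_le_mul_of_nonneg_left hcM hδ.le
    rw [abs_le]
    constructor <;>
      nlinarith [mul_nonneg (mul_nonneg hδ.le hM0) hrα, mul_nonneg (mul_nonneg hδ.le hε.le) hrα,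
        mul_nonneg hεα.le (mul_nonneg hδα hrα), mul_nonneg hδ.le hM0, mul_nonneg hεα.le hδα,
        mul_nonneg hδ.le hc0]

/-- As `δ → 0⁺`, the functional `q ↦ ∫_Ω 𝓖*_{ε,δ}(x, q(x)) dx`
converges, uniformly on bounded subsets of `L^α(Ω;ℝ^d)`, to
`q ↦ ∫_Ω (w(x)|q(x)| + (ε/α)|q(x)|^α) dx`. -/
theorem stmt11 (d : ℕ) (Ω : Set (EuclideanSpace ℝ (Fin d)))
    (hΩ : IsCompact Ω) (hΩ' : MeasurableSet Ω)
    (w : EuclideanSpace ℝ (Fin d) → ℝ) (hw : ContinuousOn w Ω) (hw0 : ∀ x ∈ Ω, 0 ≤ w x)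
    (ε α : ℝ) (hε : 0 < ε) (hα : 1 < α) [Fact (1 ≤ ENNReal.ofReal α)] (C : ℝ) :
    Tendsto (fun δ : ℝ =>
        ⨆ q : {q : Lp (EuclideanSpace ℝ (Fin d)) (ENNReal.ofReal α) (volume.restrict Ω) //
            ‖q‖ ≤ C},
          |(∫ x in Ω, calGstar ε α δ (w x) (q.1 x)) -
            ∫ x in Ω, (w x * ‖q.1 x‖ + (ε / α) * ‖q.1 x‖ ^ α)|)
      (nhdsWithin 0 (Set.Ioi 0)) (nhds 0) := by
  classical
  have hα0 : (0:ℝ) < α := by linarith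
  have hp0 : (ENNReal.ofReal α) ≠ 0 := ne_of_gt (ENNReal.ofReal_pos.mpr hα0)
  have hptop : (ENNReal.ofReal α) ≠ ∞ := ENNReal.ofReal_ne_top
  have hpre : (ENNReal.ofReal α).toReal = α := ENNReal.toReal_ofReal hα0.le
  obtain ⟨M0, hM0⟩ := hΩ.exists_bound_of_continuousOn hw
  have hM0' : (0:ℝ) ≤ max M0 0 := le_max_right _ _
  have hwM : ∀ x ∈ Ω, w x ≤ max M0 0 := by
    intro x hx
    have := hM0 x hx
    rw [Real.norm_eq_abs] at this
    exact le_trans (le_trans (le_abs_self _) this) (le_max_left _ _)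
  haveI : IsFiniteMeasure (volume.restrict Ω : Measure (EuclideanSpace ℝ (Fin d))) := by
    constructor
    rw [Measure.restrict_apply_univ]
    exact hΩ.measure_lt_top
  set M : ℝ := max M0 0 with hMdef
  set V : ℝ := (volume Ω).toReal with hV
  have hV0 : 0 ≤ V := ENNReal.toReal_nonneg
  set C' : ℝ := max C 0 with hC'
  set K : ℝ := 5 / 2 * M + ε with hKdef
  have hK0 : 0 ≤ K := add_nonneg (mul_nonneg (by norm_num) hM0') hε.le
  have hcoef : ∀ δ : ℝ, 0 < δ → 0 ≤ δ * K + ε / α * δ ^ α := fun δ hδ =>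
    add_nonneg (mul_nonneg hδ.le hK0)
      (mul_nonneg (by positivity) (Real.rpow_nonneg hδ.le _))
  set B : ℝ → ℝ := fun δ => (δ * K + ε / α * δ ^ α) * (V + C' ^ α) with hB
  have key : ∀ δ : ℝ, 0 < δ →
      ∀ q : {q : Lp (EuclideanSpace ℝ (Fin d)) (ENNReal.ofReal α) (volume.restrict Ω) //
          ‖q‖ ≤ C},
        |(∫ x in Ω, calGstar ε α δ (w x) (q.1 x)) -
          ∫ x in Ω, (w x * ‖q.1 x‖ + (ε / α) * ‖q.1 x‖ ^ α)| ≤ B δ := by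
    intro δ hδ q
    have hqm : AEStronglyMeasurable (⇑q.1) (volume.restrict Ω) := Lp.aestronglyMeasurable q.1
    have hmem : MemLp (⇑q.1) (ENNReal.ofReal α) (volume.restrict Ω) := Lp.memLp q.1
    have hint_pow : Integrable (fun x => ‖q.1 x‖ ^ α) (volume.restrict Ω) := by
      have := hmem.integrable_norm_rpow hp0 hptop
      rwa [hpre] at this
    have hint_norm : Integrable (fun x => ‖q.1 x‖) (volume.restrict Ω) := by
      have h1 : MemLp (⇑q.1) 1 (volume.restrict Ω) := hmem.mono_exponent Fact.out
      exact (memLp_one_iff_integrable.mp h1).norm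
    have hwm : AEStronglyMeasurable w (volume.restrict Ω) := hw.aestronglyMeasurable hΩ'
    have hwb : ∀ᵐ x ∂(volume.restrict Ω), ‖w x‖ ≤ M := by
      filter_upwards [ae_restrict_mem hΩ'] with x hx
      rw [Real.norm_eq_abs, abs_of_nonneg (hw0 x hx)]
      exact hwM x hx
    have hg_int : Integrable (fun x => w x * ‖q.1 x‖ + ε / α * ‖q.1 x‖ ^ α)
        (volume.restrict Ω) := (hint_norm.bdd_mul hwm hwb).add (hint_pow.const_mul _)
    have hbound_int : Integrable (fun x => (δ * K + ε / α * δ ^ α) * (1 + ‖q.1 x‖ ^ α))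
        (volume.restrict Ω) := ((integrable_const 1).add hint_pow).const_mul _
    have hFc1 : Continuous fun pr : ℝ × EuclideanSpace ℝ (Fin d) =>
        ‖pr.2‖ ^ 2 * pr.1 / (2 * δ) - δ * pr.1 := by fun_prop
    have hFc2 : Continuous fun pr : ℝ × EuclideanSpace ℝ (Fin d) =>
        ε / α * (‖pr.2‖ - δ) ^ α - 3 / 2 * (δ * pr.1) + ‖pr.2‖ * pr.1 := by
      have h1 : Continuous fun t : ℝ => t ^ α := Real.continuous_rpow_const hα0.le
      exact ((continuous_const.mul (h1.comp (continuous_snd.norm.sub continuous_const))).sub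
        (continuous_const.mul (continuous_const.mul continuous_fst))).add
        (continuous_snd.norm.mul continuous_fst)
    have hFm : Measurable fun pr : ℝ × EuclideanSpace ℝ (Fin d) =>
        calGstar ε α δ pr.1 pr.2 := by
      unfold calGstar
      exact Measurable.ite (measurableSet_le measurable_snd.norm measurable_const)
        hFc1.measurable hFc2.measurable
    have hf_meas : AEStronglyMeasurable (fun x => calGstar ε α δ (w x) (q.1 x))
        (volume.restrict Ω) :=
      (hFm.comp_aemeasurable (hwm.aemeasurable.prodMk hqm.aemeasurable)).aestronglyMeasurable
    have hptb : ∀ᵐ x ∂(volume.restrict Ω),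
        |calGstar ε α δ (w x) (q.1 x) - (w x * ‖q.1 x‖ + ε / α * ‖q.1 x‖ ^ α)| ≤
          (δ * K + ε / α * δ ^ α) * (1 + ‖q.1 x‖ ^ α) := by
      filter_upwards [ae_restrict_mem hΩ'] with x hx
      rw [calGstar_norm_eq]
      exact calGstar_pt_bound hε hα hδ (hw0 x hx) (hwM x hx) (norm_nonneg _)
    have hf_int : Integrable (fun x => calGstar ε α δ (w x) (q.1 x)) (volume.restrict Ω) := by
      refine (hbound_int.add hg_int.norm).mono' hf_meas ?_
      filter_upwards [hptb] with x hx
      rw [Real.norm_eq_abs]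
      have h2 : calGstar ε α δ (w x) (q.1 x) =
          (calGstar ε α δ (w x) (q.1 x) - (w x * ‖q.1 x‖ + ε / α * ‖q.1 x‖ ^ α)) +
            (w x * ‖q.1 x‖ + ε / α * ‖q.1 x‖ ^ α) := by ring
      rw [h2]
      refine le_trans (abs_add_le _ _) ?_
      simp only [Pi.add_apply]
      exact add_le_add hx (le_of_eq (Real.norm_eq_abs _).symm)
    have hI : (∫ x in Ω, ‖q.1 x‖ ^ α) ≤ C' ^ α := by
      have hIn : 0 ≤ ∫ x in Ω, ‖q.1 x‖ ^ α :=
        integral_nonneg fun x => Real.rpow_nonneg (norm_nonneg _) _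
      have hnq : ‖q.1‖ = (∫ x in Ω, ‖q.1 x‖ ^ α) ^ α⁻¹ := by
        rw [Lp.norm_def, hmem.eLpNorm_eq_integral_rpow_norm hp0 hptop, hpre,
          ENNReal.toReal_ofReal (Real.rpow_nonneg hIn _)]
      have heq : (∫ x in Ω, ‖q.1 x‖ ^ α) = ‖q.1‖ ^ α := by
        rw [hnq, Real.rpow_inv_rpow hIn (ne_of_gt hα0)]
      rw [heq]
      exact Real.rpow_le_rpow (norm_nonneg _) (le_trans q.2 (le_max_left _ _)) hα0.le
    calc |(∫ x in Ω, calGstar ε α δ (w x) (q.1 x)) -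
          ∫ x in Ω, (w x * ‖q.1 x‖ + (ε / α) * ‖q.1 x‖ ^ α)|
        = |∫ x in Ω, (calGstar ε α δ (w x) (q.1 x) -
            (w x * ‖q.1 x‖ + ε / α * ‖q.1 x‖ ^ α))| := by
          rw [integral_sub hf_int hg_int]
      _ ≤ ∫ x in Ω, |calGstar ε α δ (w x) (q.1 x) -
            (w x * ‖q.1 x‖ + ε / α * ‖q.1 x‖ ^ α)| := by
          simpa [Real.norm_eq_abs] using norm_integral_le_integral_norm
            (μ := volume.restrict Ω)
            (fun x => calGstar ε α δ (w x) (q.1 x) -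
              (w x * ‖q.1 x‖ + ε / α * ‖q.1 x‖ ^ α))
      _ ≤ ∫ x in Ω, (δ * K + ε / α * δ ^ α) * (1 + ‖q.1 x‖ ^ α) :=
          integral_mono_ae (hf_int.sub hg_int).abs hbound_int hptb
      _ = (δ * K + ε / α * δ ^ α) * (V + ∫ x in Ω, ‖q.1 x‖ ^ α) := by
          rw [integral_const_mul, integral_add (integrable_const 1) hint_pow, integral_const]
          simp [Measure.restrict_apply_univ, hV, smul_eq_mul, measureReal_def]
      _ ≤ B δ := by
          exact mul_le_mul_of_nonneg_left (add_le_add_right hI V) (hcoef δ hδ)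
  have hid : Tendsto (fun δ : ℝ => δ) (nhdsWithin 0 (Set.Ioi 0)) (nhds (0:ℝ)) :=
    tendsto_id.mono_left nhdsWithin_le_nhds
  have hpow : Tendsto (fun δ : ℝ => δ ^ α) (nhdsWithin 0 (Set.Ioi 0)) (nhds (0:ℝ)) := by
    have h := (Real.continuousAt_rpow_const 0 α (Or.inr hα0.le)).tendsto
    rw [Real.zero_rpow (ne_of_gt hα0)] at h
    exact h.mono_left nhdsWithin_le_nhds
  have hBt : Tendsto B (nhdsWithin 0 (Set.Ioi 0)) (nhds 0) := by
    have h := ((hid.mul_const K).add (hpow.const_mul (ε / α))).mul_const (V + C' ^ α)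
    simpa using h
  refine squeeze_zero' ?_ ?_ hBt
  · exact Filter.Eventually.of_forall fun δ => Real.iSup_nonneg fun q => abs_nonneg _
  · filter_upwards [self_mem_nhdsWithin] with δ hδ
    refine Real.iSup_le (fun q => key δ hδ q) ?_
    exact mul_nonneg (hcoef δ hδ) (add_nonneg hV0 (Real.rpow_nonneg (le_max_right _ _) _))
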